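/- arXiv:1608.06117 — 13 statements merged into one kernel-verified Lean document; each statement's English description precedes it below -/
import Mathlib

section
/- Let A = (a_1,...,a_m)^T ∈ R^{m×d} and b ∈ R^m. The map M_{A,b}(x) = (|⟨a_j,x⟩+b_j|)_{j=1}^m is injective on R^d if and only if for all u,v ∈ R^d with u ≠ 0, there exists k ∈ {1,...,m} such that ⟨a_k,u⟩(⟨a_k,v⟩+b_k) ≠ 0. -/
theorem stmt_1 (m d : ℕ) (A : Fin m → EuclideanSpace ℝ (Fin d)) (b : Fin m → ℝ) :
    Function.Injective (fun x : EuclideanSpace ℝ (Fin d) => fun j : Fin m => abs ((inner ℝ (A j) (x) : ℝ) + b j)) ↔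
    ∀ u v : EuclideanSpace ℝ (Fin d), u ≠ 0 →
      ∃ k : Fin m, (inner ℝ (A k) (u) : ℝ) * ((inner ℝ (A k) (v) : ℝ) + b k) ≠ 0 := by
  constructor
  · intro hinj u v hu
    by_contra hcon
    push_neg at hcon
    have hxy : (fun j : Fin m => |(inner ℝ (A j) (v + (2:ℝ)⁻¹ • u) : ℝ) + b j|)
        = (fun j : Fin m => |(inner ℝ (A j) (v - (2:ℝ)⁻¹ • u) : ℝ) + b j|) := by
      funext j
      have h := hcon j
      have h1 : (inner ℝ (A j) (v + (2:ℝ)⁻¹ • u) : ℝ)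
          = (inner ℝ (A j) v : ℝ) + (2:ℝ)⁻¹ * (inner ℝ (A j) u : ℝ) := by
        rw [inner_add_right, real_inner_smul_right]
      have h2 : (inner ℝ (A j) (v - (2:ℝ)⁻¹ • u) : ℝ)
          = (inner ℝ (A j) v : ℝ) - (2:ℝ)⁻¹ * (inner ℝ (A j) u : ℝ) := by
        rw [inner_sub_right, real_inner_smul_right]
      rw [h1, h2, abs_eq_abs]
      rcases mul_eq_zero.mp h with hp | hq
      · left; rw [hp]; ring
      · right
        have : (inner ℝ (A j) v : ℝ) = -b j := by linarith
        rw [this]; ring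
    have heq := hinj hxy
    apply hu
    have h5 : (1:ℝ) • u = (v + (2:ℝ)⁻¹ • u) - (v - (2:ℝ)⁻¹ • u) := by module
    rw [heq, sub_self] at h5
    simpa using h5
  · intro h x y hxy
    by_contra hne
    have hu : x - y ≠ 0 := sub_ne_zero.mpr hne
    obtain ⟨k, hk⟩ := h (x - y) ((2:ℝ)⁻¹ • (x + y)) hu
    apply hk
    have h1 : (inner ℝ (A k) (x - y) : ℝ) = (inner ℝ (A k) x : ℝ) - (inner ℝ (A k) y : ℝ) :=
      inner_sub_right _ _ _
    have h2 : (inner ℝ (A k) ((2:ℝ)⁻¹ • (x + y)) : ℝ)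
        = (2:ℝ)⁻¹ * ((inner ℝ (A k) x : ℝ) + (inner ℝ (A k) y : ℝ)) := by
      rw [real_inner_smul_right, inner_add_right]
    have h3 : |(inner ℝ (A k) x : ℝ) + b k| = |(inner ℝ (A k) y : ℝ) + b k| :=
      congrFun hxy k
    rw [abs_eq_abs] at h3
    rw [h1, h2]
    rcases h3 with h3 | h3
    · have : (inner ℝ (A k) x : ℝ) - (inner ℝ (A k) y : ℝ) = 0 := by linarith
      rw [this, zero_mul]
    · have : (2:ℝ)⁻¹ * ((inner ℝ (A k) x : ℝ) + (inner ℝ (A k) y : ℝ)) + b k = 0 := by linarith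
      rw [this, mul_zero]
end

section
/- Let A = (a_1,...,a_m)^T ∈ R^{m×d} and b ∈ R^m. Then (A,b) is affine phase retrievable for R^d if and only if for every subset S ⊆ {1,...,m} such that b_S lies in the column span of A_S, the vectors {a_j : j ∈ S^c} span R^d. Here A_S denotes the submatrix of A with rows indexed by S and b_S the corresponding subvector of b. -/
theorem stmt_2 (m d : ℕ) (A : Fin m → EuclideanSpace ℝ (Fin d)) (b : Fin m → ℝ) :
    Function.Injective (fun x : EuclideanSpace ℝ (Fin d) => fun j : Fin m => abs ((inner ℝ (A j) (x) : ℝ) + b j)) ↔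
    ∀ S : Finset (Fin m),
      (∃ v : EuclideanSpace ℝ (Fin d), ∀ j ∈ S, b j = (inner ℝ (A j) (v) : ℝ)) →
      Submodule.span ℝ {a : EuclideanSpace ℝ (Fin d) | ∃ j ∉ S, a = A j} = ⊤ := by
  classical
  constructor
  · intro hinj S hS
    obtain ⟨v, hv⟩ := hS
    by_contra hspan
    have hne : (Submodule.span ℝ {a : EuclideanSpace ℝ (Fin d) | ∃ j ∉ S, a = A j})ᗮ ≠ ⊥ := by
      intro h
      exact hspan (Submodule.orthogonal_eq_bot_iff.mp h)
    obtain ⟨u, hu, hu0⟩ := Submodule.exists_mem_ne_zero_of_ne_bot hne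
    have hinner : ∀ j ∉ S, (inner ℝ (A j) u : ℝ) = 0 := fun j hj =>
      (Submodule.mem_orthogonal _ u).mp hu (A j) (Submodule.subset_span ⟨j, hj, rfl⟩)
    have heq : (fun j : Fin m => |(inner ℝ (A j) (u - v) : ℝ) + b j|)
        = fun j : Fin m => |(inner ℝ (A j) (-u - v) : ℝ) + b j| := by
      funext j
      by_cases hj : j ∈ S
      · have h1 : (inner ℝ (A j) (u - v) : ℝ) + b j = inner ℝ (A j) u := by
          rw [inner_sub_right, ← hv j hj]; ring
        have h2 : (inner ℝ (A j) (-u - v) : ℝ) + b j = -(inner ℝ (A j) u : ℝ) := by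
          rw [inner_sub_right, inner_neg_right, ← hv j hj]; ring
        rw [h1, h2, abs_neg]
      · have h0 := hinner j hj
        rw [inner_sub_right, inner_sub_right, inner_neg_right, h0]
        ring_nf
    have := hinj heq
    have h2 : u = -u := by
      have := sub_left_inj.mp this
      exact this
    have h3 : u = 0 := by
      have h4 : u + u = 0 := by
        nth_rewrite 2 [h2]
        simp
      have h5 : (2 : ℝ) • u = 0 := by rw [two_smul]; exact h4
      rcases smul_eq_zero.mp h5 with h | h
      · norm_num at h
      · exact h
    exact hu0 h3
  · intro h x y hxy
    set S : Finset (Fin m) := Finset.univ.filter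
      (fun j => (inner ℝ (A j) x : ℝ) + b j = -((inner ℝ (A j) y : ℝ) + b j)) with hSdef
    have hv : ∀ j ∈ S, b j = (inner ℝ (A j) (-((2:ℝ)⁻¹ • (x + y))) : ℝ) := by
      intro j hj
      rw [hSdef, Finset.mem_filter] at hj
      rw [inner_neg_right, real_inner_smul_right, inner_add_right]
      have := hj.2
      linarith
    have hspan := h S ⟨-((2:ℝ)⁻¹ • (x + y)), hv⟩
    have horth : ∀ j ∉ S, (inner ℝ (A j) (x - y) : ℝ) = 0 := by
      intro j hj
      have habs : |(inner ℝ (A j) x : ℝ) + b j| = |(inner ℝ (A j) y : ℝ) + b j| := congrFun hxy j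
      have hne : ¬ ((inner ℝ (A j) x : ℝ) + b j = -((inner ℝ (A j) y : ℝ) + b j)) := by
        intro hc
        exact hj (Finset.mem_filter.mpr ⟨Finset.mem_univ j, hc⟩)
      have heq := (abs_eq_abs.mp habs).resolve_right hne
      rw [inner_sub_right]; linarith
    have hle : Submodule.span ℝ {a : EuclideanSpace ℝ (Fin d) | ∃ j ∉ S, a = A j}
        ≤ (ℝ ∙ (x - y))ᗮ := by
      rw [Submodule.span_le]
      rintro a ⟨j, hj, rfl⟩
      rw [SetLike.mem_coe, Submodule.mem_orthogonal_singleton_iff_inner_right,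
        real_inner_comm]
      exact horth j hj
    have htop : (ℝ ∙ (x - y))ᗮ = ⊤ := top_unique (hspan ▸ hle)
    have hmem : x - y ∈ (ℝ ∙ (x - y))ᗮ := htop ▸ Submodule.mem_top
    have hz : (inner ℝ (x - y) (x - y) : ℝ) = 0 :=
      (Submodule.mem_orthogonal _ _).mp hmem (x - y) (Submodule.mem_span_singleton_self _)
    have h0 : x - y = 0 := inner_self_eq_zero.mp hz
    exact sub_eq_zero.mp h0
end

section
/- Let A ∈ R^{m×d} and b ∈ R^m. If m ≤ 2d-1, then (A,b) is not affine phase retrievable for R^d; that is, the map x ↦ (|⟨a_j,x⟩+b_j|)_{j=1}^m is not injective on R^d. -/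
theorem stmt_3 (m d : ℕ) (hm : m < 2 * d) (A : Fin m → EuclideanSpace ℝ (Fin d)) (b : Fin m → ℝ) :
    ¬ Function.Injective
      (fun x : EuclideanSpace ℝ (Fin d) => fun j : Fin m => abs ((inner ℝ (A j) (x) : ℝ) + b j)) := by
  classical
  intro hinj
  by_cases htop : Submodule.span ℝ (Set.range A) = ⊤
  · -- spanning case
    obtain ⟨s, hsub, hspan, hind⟩ := exists_linearIndependent ℝ (Set.range A)
    rw [htop] at hspan
    have hsfin : s.Finite := hind.setFinite
    haveI : Fintype s := hsfin.fintype
    let B : Module.Basis s ℝ (EuclideanSpace ℝ (Fin d)) := Module.Basis.mk hind (by rw [Subtype.range_coe]; exact hspan.ge)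
    have hcard : Fintype.card s = d := by
      have h1 := Module.finrank_eq_card_basis B
      have h2 : Module.finrank ℝ (EuclideanSpace ℝ (Fin d)) = d :=
        finrank_euclideanSpace_fin
      omega
    have hchoose : ∀ w : s, ∃ j, A j = (w : EuclideanSpace ℝ (Fin d)) := fun w => hsub w.2
    choose jmap hjmap using hchoose
    have hjinj : Function.Injective jmap := by
      intro w w' h
      apply Subtype.ext
      rw [← hjmap w, ← hjmap w', h]
    let S : Finset (Fin m) := Finset.univ.image jmap
    have hScard : S.card = d := by
      rw [Finset.card_image_of_injective _ hjinj, Finset.card_univ, hcard]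
    have hd0 : 0 < d := by omega
    let W : Submodule ℝ (EuclideanSpace ℝ (Fin d)) := Submodule.span ℝ (↑(Sᶜ.image A) : Set (EuclideanSpace ℝ (Fin d)))
    have hWlt : Module.finrank ℝ W < d := by
      calc Module.finrank ℝ W ≤ (Sᶜ.image A).card := finrank_span_finset_le_card _
        _ ≤ Sᶜ.card := Finset.card_image_le
        _ < d := by
            rw [Finset.card_compl, hScard]
            simp only [Fintype.card_fin]
            omega
    have hWne : W ≠ ⊤ := by
      intro h
      have : Module.finrank ℝ W = d := by
        rw [h]
        rw [finrank_top]; exact finrank_euclideanSpace_fin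
      omega
    have hWbot : Wᗮ ≠ ⊥ := by
      intro h
      exact hWne (Submodule.orthogonal_eq_bot_iff.mp h)
    obtain ⟨v, hvW, hv0⟩ := Submodule.exists_mem_ne_zero_of_ne_bot hWbot
    let f : EuclideanSpace ℝ (Fin d) →ₗ[ℝ] ℝ := B.constr ℝ (fun w => - b (jmap w))
    let u : EuclideanSpace ℝ (Fin d) := (InnerProductSpace.toDual ℝ (EuclideanSpace ℝ (Fin d))).symm (LinearMap.toContinuousLinearMap f)
    have hu : ∀ z : EuclideanSpace ℝ (Fin d), (inner ℝ u z : ℝ) = f z := fun z => by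
      rw [show ((inner ℝ u z : ℝ)) = (LinearMap.toContinuousLinearMap f) z from InnerProductSpace.toDual_symm_apply]
      simp
    have key : (fun j : Fin m => |(inner ℝ (A j) (u + v) : ℝ) + b j|)
        = (fun j : Fin m => |(inner ℝ (A j) (u - v) : ℝ) + b j|) := by
      funext j
      by_cases hj : j ∈ S
      · obtain ⟨w, _, hw⟩ := Finset.mem_image.mp hj
        have hAj : (inner ℝ (A j) u : ℝ) = - b j := by
          rw [real_inner_comm, hu]
          have hAB : A j = B w := by
            rw [← hw, hjmap w]
            simp [B, Module.Basis.coe_mk]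
          rw [hAB]
          simp only [f, Module.Basis.constr_basis]
          rw [← hw]
        have e1 : (inner ℝ (A j) (u + v) : ℝ) + b j = (inner ℝ (A j) v : ℝ) := by
          rw [inner_add_right, hAj]; ring
        have e2 : (inner ℝ (A j) (u - v) : ℝ) + b j = -(inner ℝ (A j) v : ℝ) := by
          rw [inner_sub_right, hAj]; ring
        rw [e1, e2, abs_neg]
      · have hmem : A j ∈ W := by
          apply Submodule.subset_span
          simp only [Finset.coe_image, Set.mem_image, Finset.mem_coe, Finset.mem_compl]
          exact ⟨j, hj, rfl⟩
        have hzero : (inner ℝ (A j) v : ℝ) = 0 :=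
          (Submodule.mem_orthogonal _ _).mp hvW (A j) hmem
        rw [inner_add_right, inner_sub_right, hzero]
        ring_nf
    have heq := hinj key
    have : v = 0 := by
      have h2 : (2 : ℝ) • v = 0 := by
        have : u + v - (u - v) = (2 : ℝ) • v := by
          module
        rw [← this, heq, sub_self]
      have := smul_eq_zero.mp h2
      rcases this with h | h
      · norm_num at h
      · exact h
    exact hv0 this
  · -- non-spanning case
    have hbot : (Submodule.span ℝ (Set.range A))ᗮ ≠ ⊥ := by
      intro h
      exact htop (Submodule.orthogonal_eq_bot_iff.mp h)
    obtain ⟨v, hvW, hv0⟩ := Submodule.exists_mem_ne_zero_of_ne_bot hbot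
    have key : (fun j : Fin m => |(inner ℝ (A j) v : ℝ) + b j|)
        = (fun j : Fin m => |(inner ℝ (A j) (0 : EuclideanSpace ℝ (Fin d)) : ℝ) + b j|) := by
      funext j
      have hzero : (inner ℝ (A j) v : ℝ) = 0 :=
        (Submodule.mem_orthogonal _ _).mp hvW (A j)
          (Submodule.subset_span (Set.mem_range_self j))
      rw [hzero, inner_zero_right]
    exact hv0 (hinj key)
end

section
/- Suppose A ∈ R^{m×d} with m ≥ 2d has the property that any d rows of A are linearly independent, and b ∈ R^m has the property that for every subset S ⊆ {1,...,m} with #S > d, b_S does not lie in the column span of A_S. Then (A,b) is affine phase retrievable for R^d. -/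
theorem stmt_4 (m d : ℕ) (hm : 2 * d ≤ m) (A : Fin m → EuclideanSpace ℝ (Fin d)) (b : Fin m → ℝ)
    (hA : ∀ S : Finset (Fin m), S.card = d →
      LinearIndependent ℝ (fun j : S => A j))
    (hb : ∀ S : Finset (Fin m), d < S.card →
      ¬ ∃ v : EuclideanSpace ℝ (Fin d), ∀ j ∈ S, b j = (inner ℝ (A j) (v) : ℝ)) :
    Function.Injective
      (fun x : EuclideanSpace ℝ (Fin d) => fun j : Fin m => abs ((inner ℝ (A j) (x) : ℝ) + b j)) := by
  classical
  rcases Nat.eq_zero_or_pos d with hd | hd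
  · subst hd
    intro x y _
    exact Subsingleton.elim x y
  intro x y h
  by_contra hxy
  have hw : x - y ≠ 0 := sub_ne_zero.mpr hxy
  have habs : ∀ j : Fin m, |(inner ℝ (A j) x : ℝ) + b j| = |(inner ℝ (A j) y : ℝ) + b j| :=
    fun j => congrFun h j
  -- each j satisfies one of two branches
  have hbr : ∀ j : Fin m, (inner ℝ (A j) (x - y) : ℝ) = 0 ∨
      (inner ℝ (A j) x : ℝ) + b j = -((inner ℝ (A j) y : ℝ) + b j) := by
    intro j
    rcases abs_eq_abs.mp (habs j) with h1 | h1
    · left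
      rw [inner_sub_right]
      linarith
    · right; exact h1
  set T : Finset (Fin m) := Finset.univ.filter (fun j => (inner ℝ (A j) (x - y) : ℝ) = 0) with hT
  -- T has fewer than d elements
  have hTcard : T.card < d := by
    by_contra hc
    push_neg at hc
    obtain ⟨S, hST, hScard⟩ := Finset.exists_subset_card_eq hc
    have hli := hA S hScard
    haveI : Nonempty S := (Finset.card_pos.mp (hScard ▸ hd)).to_subtype
    have hcard : Fintype.card S = Module.finrank ℝ (EuclideanSpace ℝ (Fin d)) := by
      rw [finrank_euclideanSpace_fin, Fintype.card_coe, hScard]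
    let B := basisOfLinearIndependentOfCardEqFinrank hli hcard
    have hB : ∀ i : S, B i = A i := fun i =>
      congrFun (coe_basisOfLinearIndependentOfCardEqFinrank hli hcard) i
    have : x - y = 0 := by
      refine (InnerProductSpace.ext_inner_left_basis B (fun i => ?_)).symm
      rw [hB i, inner_zero_right]
      have hi : (i : Fin m) ∈ T := hST i.2
      simpa [hT] using ((Finset.mem_filter.mp hi).2).symm
    exact hw this
  -- complement of T
  have hTc : d < Tᶜ.card := by
    have : Tᶜ.card = m - T.card := by
      rw [Finset.card_compl, Fintype.card_fin]
    omega
  apply hb Tᶜ hTc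
  refine ⟨(-(1/2 : ℝ)) • (x + y), fun j hj => ?_⟩
  have hjT : j ∉ T := Finset.mem_compl.mp hj
  have h2 : (inner ℝ (A j) x : ℝ) + b j = -((inner ℝ (A j) y : ℝ) + b j) := by
    rcases hbr j with h1 | h1
    · exact absurd (Finset.mem_filter.mpr ⟨Finset.mem_univ j, h1⟩) hjT
    · exact h1
  have : (inner ℝ (A j) ((-(1/2 : ℝ)) • (x + y)) : ℝ)
      = (-(1/2 : ℝ)) * ((inner ℝ (A j) x : ℝ) + (inner ℝ (A j) y : ℝ)) := by
    rw [inner_smul_right, inner_add_right]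
  rw [this]
  linarith
end

section
/- Let d ≥ 2 and m ≥ 2d. The set of pairs (A,b) ∈ R^{m×d} × R^m that are affine phase retrievable for R^d is not an open subset of R^{m×d} × R^m (with the Euclidean topology). -/
theorem stmt_5 (m d : ℕ) (hd : 2 ≤ d) (hm : 2 * d ≤ m) :
    ¬ IsOpen {p : (Fin m → EuclideanSpace ℝ (Fin d)) × (Fin m → ℝ) |
        Function.Injective
          (fun x : EuclideanSpace ℝ (Fin d) => fun j : Fin m => abs ((inner ℝ (p.1 j) (x) : ℝ) + p.2 j))} := by
  intro hopen
  have h0d : 0 < d := by omega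
  have h1d : 1 < d := by omega
  set z0 : Fin d := ⟨0, h0d⟩ with hz0
  set z1 : Fin d := ⟨1, h1d⟩ with hz1
  set A : Fin m → EuclideanSpace ℝ (Fin d) := fun j =>
    if h : (j : ℕ) < d then EuclideanSpace.single ⟨j, h⟩ 1
    else if h2 : (j : ℕ) < 2 * d then EuclideanSpace.single ⟨(j : ℕ) - d, by omega⟩ 1
    else EuclideanSpace.single z0 1 with hA
  set b : Fin m → ℝ := fun j => if (j : ℕ) < d then 0 else if (j : ℕ) < 2 * d then 1 else 0
    with hb
  -- (A, b) is affine phase retrievable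
  have hmem : (A, b) ∈ {p : (Fin m → EuclideanSpace ℝ (Fin d)) × (Fin m → ℝ) |
      Function.Injective
        (fun x : EuclideanSpace ℝ (Fin d) => fun j : Fin m =>
          abs ((inner ℝ (p.1 j) (x) : ℝ) + p.2 j))} := by
    intro x y hxy
    have key : ∀ i : Fin d, x i = y i := by
      intro i
      have hi1 : (i : ℕ) < m := by omega
      have hi2 : d + (i : ℕ) < m := by omega
      have e1 := congrFun hxy ⟨i, hi1⟩
      have e2 := congrFun hxy ⟨d + i, hi2⟩
      have hc1 : ((⟨(i : ℕ), hi1⟩ : Fin m) : ℕ) < d := i.isLt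
      have hc2 : ¬ ((⟨d + (i : ℕ), hi2⟩ : Fin m) : ℕ) < d := by simp
      have hc3 : ((⟨d + (i : ℕ), hi2⟩ : Fin m) : ℕ) < 2 * d := by
        simp only [Fin.val_mk]; omega
      simp only [hA, hb, Fin.val_mk, dif_pos hc1, if_pos hc1] at e1
      simp only [hA, hb, Fin.val_mk, dif_neg hc2, if_neg hc2, dif_pos hc3, if_pos hc3] at e2
      simp only [EuclideanSpace.inner_single_left, map_one, one_mul, Fin.eta, add_zero] at e1
      simp only [EuclideanSpace.inner_single_left, map_one, one_mul,
        show d + (i : ℕ) - d = (i : ℕ) from by omega, Fin.eta] at e2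
      have a1 : x i = y i ∨ x i = -(y i) := abs_eq_abs.mp e1
      have a2 : x i + 1 = y i + 1 ∨ x i + 1 = -(y i + 1) := abs_eq_abs.mp e2
      rcases a1 with a1 | a1 <;> rcases a2 with a2 | a2 <;> linarith
    exact PiLp.ext key
  obtain ⟨r, hr, hball⟩ := Metric.isOpen_iff.mp hopen _ hmem
  set ε : ℝ := r / 2 with hε
  have hεpos : 0 < ε := by positivity
  have hεne : ε ≠ 0 := ne_of_gt hεpos
  -- perturbed matrix
  set Aε : Fin m → EuclideanSpace ℝ (Fin d) := fun j =>
    if (j : ℕ) = d + 1 then A j + ε • EuclideanSpace.single z0 1 else A j with hAε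
  -- the perturbed pair is in the ball
  have hdist : (Aε, b) ∈ Metric.ball (A, b) r := by
    rw [Metric.mem_ball, Prod.dist_eq]
    have h1 : dist Aε A ≤ ε := by
      rw [dist_pi_le_iff (le_of_lt hεpos)]
      intro j
      by_cases hj : (j : ℕ) = d + 1
      · simp only [hAε, if_pos hj]
        rw [dist_self_add_left, norm_smul, EuclideanSpace.norm_single]
        simp [abs_of_pos hεpos]
      · simp only [hAε, if_neg hj, dist_self]
        exact le_of_lt hεpos
    simp only [dist_self]
    apply max_lt _ hr
    calc dist Aε A ≤ ε := h1
      _ < r := by rw [hε]; linarith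
  have hinj := hball hdist
  -- witnesses of non-injectivity
  set x : EuclideanSpace ℝ (Fin d) :=
    (-(1 / ε)) • EuclideanSpace.single z0 1 + (1 / 2 : ℝ) • EuclideanSpace.single z1 1 with hx
  set y : EuclideanSpace ℝ (Fin d) :=
    (-(1 / ε)) • EuclideanSpace.single z0 1 + (-(1 / 2) : ℝ) • EuclideanSpace.single z1 1 with hy
  have hxval : ∀ k : Fin d, x k = (if k = z0 then -(1 / ε) else 0) +
      (if k = z1 then (1 / 2 : ℝ) else 0) := by
    intro k
    simp only [hx, PiLp.add_apply, PiLp.smul_apply, EuclideanSpace.single_apply, smul_eq_mul,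
      mul_ite, mul_one, mul_zero]
  have hyval : ∀ k : Fin d, y k = (if k = z0 then -(1 / ε) else 0) +
      (if k = z1 then (-(1 / 2) : ℝ) else 0) := by
    intro k
    simp only [hy, PiLp.add_apply, PiLp.smul_apply, EuclideanSpace.single_apply, smul_eq_mul,
      mul_ite, mul_one, mul_zero]
  have hz01 : z0 ≠ z1 := by simp [hz0, hz1, Fin.ext_iff]
  have hxy : x ≠ y := by
    intro h
    have := congrArg (fun v : EuclideanSpace ℝ (Fin d) => v z1) h
    simp only [hxval z1, hyval z1, if_neg (Ne.symm hz01), if_pos rfl] at this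
    norm_num at this
  apply hxy
  apply hinj
  funext j
  simp only
  by_cases h1 : (j : ℕ) < d
  · -- first block
    have hj1 : (j : ℕ) ≠ d + 1 := by omega
    simp only [hAε, hA, hb, if_neg hj1, dif_pos h1, if_pos h1,
      EuclideanSpace.inner_single_left, map_one, one_mul, add_zero]
    rw [hxval, hyval]
    by_cases hk1 : (⟨(j : ℕ), h1⟩ : Fin d) = z1
    · simp [hk1, if_neg (Ne.symm hz01)]
    · simp [hk1]
  · by_cases h2 : (j : ℕ) < 2 * d
    · by_cases h3 : (j : ℕ) = d + 1
      · -- the perturbed row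
        have hsub : (⟨(j : ℕ) - d, by omega⟩ : Fin d) = z1 := by
          simp [Fin.ext_iff, h3, hz1]
        simp only [hAε, hA, hb, if_pos h3, dif_neg h1, dif_pos h2, if_neg h1, if_pos h2, hsub,
          inner_add_left, real_inner_smul_left, EuclideanSpace.inner_single_left, map_one,
          one_mul]
        rw [hxval z1, hxval z0, hyval z1, hyval z0]
        simp only [if_pos rfl, if_neg hz01, if_neg (Ne.symm hz01), add_zero, zero_add]
        simp only [if_true]
        have hone : ε * -(1 / ε) = -1 := by field_simp
        rw [hone]
        norm_num
      · -- unperturbed second block row, index ≠ 1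
        have hsub : (⟨(j : ℕ) - d, by omega⟩ : Fin d) ≠ z1 := by
          intro hcontra
          have hval : (j : ℕ) - d = 1 := congrArg Fin.val hcontra
          omega
        simp only [hAε, hA, hb, if_neg h3, dif_neg h1, dif_pos h2, if_neg h1, if_pos h2,
          EuclideanSpace.inner_single_left, map_one, one_mul]
        rw [hxval, hyval, if_neg hsub, if_neg hsub]
    · -- extra rows
      have hj1 : (j : ℕ) ≠ d + 1 := by omega
      simp only [hAε, hA, hb, if_neg hj1, dif_neg h1, dif_neg h2, if_neg h1, if_neg h2,
        EuclideanSpace.inner_single_left, map_one, one_mul, add_zero]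
      rw [hxval z0, hyval z0]
      simp [hz01]
end

section
/- Let 1 ≤ s ≤ d-1 and suppose (A,b) ∈ R^{m×d} × R^m is such that the map x ↦ (|⟨a_j,x⟩+b_j|)_{j=1}^m is injective on the set Σ_s(R^d) of vectors with at most s nonzero entries. Then m ≥ 2s+1. -/
open Module Submodule

section SPRaux

section SPRaux

/-- A linear functional on `Fin n → ℝ` built from a coefficient vector. -/
noncomputable def fnl {n : ℕ} (c : Fin n → ℝ) : (Fin n → ℝ) →ₗ[ℝ] ℝ :=
  ∑ i, c i • LinearMap.proj i

lemma fnl_apply {n : ℕ} (c x : Fin n → ℝ) : fnl c x = ∑ i, c i * x i := by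
  simp [fnl, LinearMap.sum_apply]

lemma exists_minor {n : ℕ} (U : Submodule ℝ (Fin n → ℝ)) (hU : 2 ≤ Module.finrank ℝ U) :
    ∃ u v : Fin n → ℝ, u ∈ U ∧ v ∈ U ∧ ∃ i k, u i * v k - u k * v i ≠ 0 := by
  have hfb := Module.finBasis ℝ ↥U
  set r := Module.finrank ℝ ↥U with hr
  have h0 : (0 : ℕ) < r := by omega
  have h1 : (1 : ℕ) < r := by omega
  set i0 : Fin r := ⟨0, h0⟩
  set i1 : Fin r := ⟨1, h1⟩
  refine ⟨(hfb i0 : Fin n → ℝ), (hfb i1 : Fin n → ℝ), (hfb i0).2, (hfb i1).2, ?_⟩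
  by_contra hc
  push_neg at hc
  have hc' : ∀ i k, (hfb i0 : Fin n → ℝ) i * (hfb i1 : Fin n → ℝ) k
      = (hfb i0 : Fin n → ℝ) k * (hfb i1 : Fin n → ℝ) i := by
    intro i k; have := hc i k; linarith
  have hne : (hfb i0 : Fin n → ℝ) ≠ 0 := by
    have := hfb.ne_zero i0
    simpa [Submodule.coe_eq_zero] using fun h => this (Subtype.ext h)
  obtain ⟨l, hl⟩ : ∃ l, (hfb i0 : Fin n → ℝ) l ≠ 0 := by
    by_contra hcc; push_neg at hcc; exact hne (funext hcc)
  set c : ℝ := (hfb i1 : Fin n → ℝ) l / (hfb i0 : Fin n → ℝ) l with hcdef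
  have hv : hfb i1 = c • hfb i0 := by
    apply Subtype.ext
    have : ((c • hfb i0 : ↥U) : Fin n → ℝ) = c • ((hfb i0 : Fin n → ℝ)) := rfl
    rw [this]
    funext k
    have := hc' l k
    rw [Pi.smul_apply, smul_eq_mul, hcdef, div_mul_eq_mul_div, eq_div_iff hl]
    linarith [hc' l k]
  have := congrArg (hfb.repr) hv
  rw [hfb.repr_self, map_smul, hfb.repr_self] at this
  have h2 := DFunLike.congr_fun this i1
  have hne01 : i0 ≠ i1 := by simp [i0, i1, Fin.ext_iff]
  rw [Finsupp.single_eq_same] at h2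
  simp [Finsupp.single_apply, hne01] at h2

lemma exists_ker_coord {n : ℕ} (U : Submodule ℝ (Fin n → ℝ)) (hU : 2 ≤ Module.finrank ℝ U)
    (i : Fin n) : ∃ u : Fin n → ℝ, u ∈ U ∧ u ≠ 0 ∧ u i = 0 := by
  set φ : ↥U →ₗ[ℝ] ℝ := (LinearMap.proj i).comp U.subtype with hφ
  have hrk := LinearMap.finrank_range_add_finrank_ker φ
  have hle : Module.finrank ℝ (LinearMap.range φ) ≤ 1 := by
    simpa using Submodule.finrank_le (LinearMap.range φ)
  have hker : 0 < Module.finrank ℝ (LinearMap.ker φ) := by omega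
  haveI := (Module.finrank_pos_iff (R := ℝ) (M := ↥(LinearMap.ker φ))).mp (by exact hker)
  obtain ⟨x, hx⟩ := exists_ne (0 : ↥(LinearMap.ker φ))
  refine ⟨((x : ↥U) : Fin n → ℝ), (x : ↥U).2, ?_, ?_⟩
  · intro h0
    apply hx
    apply Subtype.ext
    apply Subtype.ext
    exact h0
  · exact LinearMap.mem_ker.mp x.2

lemma meas_eq {n : ℕ} (g : (Fin n → ℝ) →ₗ[ℝ] ℝ) (bj : ℝ) (u w : Fin n → ℝ)
    (hj : g u = 0 ∨ g w = -(2 * bj)) :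
    |g ((2⁻¹ : ℝ) • (w + u)) + bj| = |g ((2⁻¹ : ℝ) • (w - u)) + bj| := by
  have e1 : g ((2⁻¹ : ℝ) • (w + u)) + bj = 2⁻¹ * (g w + g u) + bj := by
    rw [map_smul, map_add]; simp [smul_eq_mul]
  have e2 : g ((2⁻¹ : ℝ) • (w - u)) + bj = 2⁻¹ * (g w - g u) + bj := by
    rw [map_smul, map_sub]; simp [smul_eq_mul]
  rcases hj with hj | hj
  · rw [e1, e2, hj]; ring_nf
  · rw [e1, e2, hj]
    have : 2⁻¹ * (-(2 * bj) + g u) + bj = -(2⁻¹ * (-(2 * bj) - g u) + bj) := by ring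
    rw [this, abs_neg]

lemma half_ne {n : ℕ} (u w : Fin n → ℝ) (hu : u ≠ 0) :
    (2⁻¹ : ℝ) • (w + u) ≠ (2⁻¹ : ℝ) • (w - u) := by
  intro heq
  apply hu
  have h2 : w + u = w - u := by
    have := congrArg (fun z => (2 : ℝ) • z) heq
    simpa [smul_smul] using this
  have h3 : u = -u := by
    rw [sub_eq_add_neg] at h2
    exact add_left_cancel h2
  funext i
  have := congrFun h3 i
  rw [Pi.neg_apply] at this
  simp only [Pi.zero_apply]
  linarith

lemma key (s m : ℕ) (hs : 1 ≤ s) (hm : m ≤ 2 * s)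
    (gL : Fin m → (Fin (s+1) → ℝ) →ₗ[ℝ] ℝ) (b : Fin m → ℝ) :
    ∃ x y : Fin (s+1) → ℝ, x ≠ y ∧ (∃ i, x i = 0) ∧ (∃ i, y i = 0) ∧
      ∀ j, |gL j x + b j| = |gL j y + b j| := by
  by_cases hker : ∃ u : Fin (s+1) → ℝ, u ≠ 0 ∧ ∀ j, gL j u = 0
  · -- Case 1 : a common kernel vector exists
    obtain ⟨u, hu0, hu⟩ := hker
    obtain ⟨i, hi⟩ : ∃ i, u i ≠ 0 := by
      by_contra hc; push_neg at hc; exact hu0 (funext hc)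
    have h1lt : (1 : ℕ) < s + 1 := by omega
    set k : Fin (s+1) := if i = ⟨0, Nat.succ_pos s⟩ then ⟨1, h1lt⟩ else ⟨0, Nat.succ_pos s⟩
      with hk
    have hki : k ≠ i := by
      rcases eq_or_ne i ⟨0, Nat.succ_pos s⟩ with h | h
      · rw [hk, if_pos h, h]; simp [Fin.ext_iff]
      · rw [hk, if_neg h]; exact Ne.symm h
    refine ⟨Pi.single k (-(u k)), Pi.single k (-(u k)) + u, ?_, ⟨i, ?_⟩, ⟨k, ?_⟩, ?_⟩
    · intro hxy
      exact hu0 (by simpa using (left_eq_add.mp hxy))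
    · exact Pi.single_eq_of_ne (Ne.symm hki) _
    · simp [Pi.single_eq_same]
    · intro j
      rw [map_add, hu j, add_zero]
  · -- Case 2 : the functionals have trivial common kernel
    push_neg at hker
    have hker' : ∀ u : Fin (s+1) → ℝ, (∀ j, gL j u = 0) → u = 0 := by
      intro u hu
      by_contra h0
      obtain ⟨j, hj⟩ := hker u h0
      exact hj (hu j)
    have hspan : span ℝ (Set.range gL) = ⊤ := by
      apply Submodule.span_eq_top_of_ne_zero
      intro z hz
      by_contra hc
      push_neg at hc
      exact hz (hker' z (fun j => hc (gL j) ⟨j, rfl⟩))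
    obtain ⟨t, hts, htsp, hti⟩ := exists_linearIndependent ℝ (Set.range gL)
    haveI : Fintype t := hti.setFinite.fintype
    set hB : Basis t ℝ (Module.Dual ℝ (Fin (s+1) → ℝ)) :=
      Basis.mk hti (by rw [Subtype.range_coe, htsp, hspan]) with hBdef
    have hcardt : Fintype.card t = s + 1 := by
      have h1 := Module.finrank_eq_card_basis hB
      rw [Subspace.dual_finrank_eq, Module.finrank_fin_fun] at h1
      omega
    have hchoice : ∀ φ : t, ∃ j, gL j = (φ : Module.Dual ℝ (Fin (s+1) → ℝ)) :=
      fun φ => hts φ.2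
    set c : t → Fin m := fun φ => (hchoice φ).choose with hcdef
    have hc : ∀ φ, gL (c φ) = (φ : Module.Dual ℝ (Fin (s+1) → ℝ)) :=
      fun φ => (hchoice φ).choose_spec
    have cinj : Function.Injective c := by
      intro φ ψ hφψ
      apply Subtype.ext
      rw [← hc φ, ← hc ψ, hφψ]
    set J2 : Finset (Fin m) := Finset.univ.image c with hJ2def
    have hJ2card : J2.card = s + 1 := by
      rw [hJ2def, Finset.card_image_of_injective _ cinj, Finset.card_univ, hcardt]
    set J1 : Finset (Fin m) := J2ᶜ with hJ1def
    have hJ1card : J1.card = m - (s+1) := by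
      rw [hJ1def, Finset.card_compl, hJ2card, Fintype.card_fin]
    set w : Fin (s+1) → ℝ :=
      (Module.evalEquiv ℝ (Fin (s+1) → ℝ)).symm (hB.constr ℝ (fun φ => -(2 * b (c φ))))
      with hwdef
    have hw : ∀ j ∈ J2, gL j w = -(2 * b j) := by
      intro j hj
      rw [hJ2def, Finset.mem_image] at hj
      obtain ⟨φ, -, rfl⟩ := hj
      rw [hc φ, hwdef, Module.apply_evalEquiv_symm_apply]
      have : (φ : Module.Dual ℝ (Fin (s+1) → ℝ)) = hB φ := by rw [hBdef, Basis.mk_apply]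
      rw [this, Basis.constr_basis]
    have hw' : ∀ j, j ∉ J1 → gL j w = -(2 * b j) := by
      intro j hj
      apply hw
      rw [hJ1def, Finset.mem_compl, not_not] at hj
      exact hj
    set U : Submodule ℝ (Fin (s+1) → ℝ) :=
      LinearMap.ker (LinearMap.pi (fun j : {j // j ∈ J1} => gL j.val)) with hUdef
    have hUmem : ∀ u, u ∈ U ↔ ∀ j ∈ J1, gL j u = 0 := by
      intro u
      rw [hUdef, LinearMap.mem_ker]
      constructor
      · intro h0 j hj
        exact congrFun h0 ⟨j, hj⟩
      · intro h0
        funext j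
        exact h0 j.1 j.2
    have hU2 : 2 ≤ Module.finrank ℝ U := by
      have h1 := LinearMap.finrank_range_add_finrank_ker
        (LinearMap.pi (fun j : {j // j ∈ J1} => gL j.val))
      rw [Module.finrank_fin_fun] at h1
      have h2 : Module.finrank ℝ
          (LinearMap.range (LinearMap.pi (fun j : {j // j ∈ J1} => gL j.val)))
          ≤ J1.card := by
        have := Submodule.finrank_le
          (LinearMap.range (LinearMap.pi (fun j : {j // j ∈ J1} => gL j.val)))
        rwa [Module.finrank_pi, Fintype.card_coe] at this
      rw [← hUdef] at h1
      omega
    -- produce u ∈ U, nonzero, with the needed vanishing coordinates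
    by_cases hwz : ∃ i, w i = 0
    · obtain ⟨i, hi⟩ := hwz
      obtain ⟨u, huU, hu0, hui⟩ := exists_ker_coord U hU2 i
      refine ⟨(2⁻¹ : ℝ) • (w + u), (2⁻¹ : ℝ) • (w - u), half_ne u w hu0, ⟨i, ?_⟩, ⟨i, ?_⟩, ?_⟩
      · simp [hi, hui]
      · simp [hi, hui]
      · intro j
        apply meas_eq
        by_cases hj : j ∈ J1
        · exact Or.inl ((hUmem u).mp huU j hj)
        · exact Or.inr (hw' j hj)
    · push_neg at hwz
      obtain ⟨u1, u2, h1, h2, i, k, hD⟩ := exists_minor U hU2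
      set D : ℝ := u1 i * u2 k - u1 k * u2 i with hDdef
      set lam : ℝ := (-(w i) * u2 k - w k * u2 i) / D with hlam
      set mu : ℝ := (u1 i * w k + u1 k * w i) / D with hmu
      set u : Fin (s+1) → ℝ := lam • u1 + mu • u2 with hudef
      have huU : u ∈ U := U.add_mem (U.smul_mem _ h1) (U.smul_mem _ h2)
      have hui : u i = -(w i) := by
        rw [hudef]
        simp only [Pi.add_apply, Pi.smul_apply, smul_eq_mul, hlam, hmu]
        field_simp
        ring
      have huk : u k = w k := by
        rw [hudef]
        simp only [Pi.add_apply, Pi.smul_apply, smul_eq_mul, hlam, hmu]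
        field_simp
        ring
      have hu0 : u ≠ 0 := by
        intro h0
        apply hwz i
        have : u i = 0 := by rw [h0]; rfl
        rw [hui] at this
        linarith
      refine ⟨(2⁻¹ : ℝ) • (w + u), (2⁻¹ : ℝ) • (w - u), half_ne u w hu0, ⟨i, ?_⟩, ⟨k, ?_⟩, ?_⟩
      · simp [hui]
      · simp [huk]
      · intro j
        apply meas_eq
        by_cases hj : j ∈ J1
        · exact Or.inl ((hUmem u).mp huU j hj)
        · exact Or.inr (hw' j hj)

variable {s d : ℕ}

noncomputable def emb (hsd : s + 1 ≤ d) (x : Fin (s+1) → ℝ) : EuclideanSpace ℝ (Fin d) :=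
  WithLp.toLp 2 (fun i => if hi : (i : ℕ) < s + 1 then x ⟨i, hi⟩ else 0)

lemma emb_castLE (hsd : s + 1 ≤ d) (x : Fin (s+1) → ℝ) (i : Fin (s+1)) :
    emb hsd x (Fin.castLE hsd i) = x i := by
  simp only [emb, Fin.castLE]
  rw [dif_pos i.isLt]

lemma emb_injective (hsd : s + 1 ≤ d) : Function.Injective (emb hsd) := by
  intro x y hxy
  funext i
  have := congrArg (fun z : EuclideanSpace ℝ (Fin d) => z (Fin.castLE hsd i)) hxy
  rwa [emb_castLE, emb_castLE] at this

lemma inner_emb (hsd : s + 1 ≤ d) (a : EuclideanSpace ℝ (Fin d)) (x : Fin (s+1) → ℝ) :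
    (inner ℝ a (emb hsd x) : ℝ) = fnl (fun i => a (Fin.castLE hsd i)) x := by
  rw [fnl_apply]
  have h1 : (inner ℝ a (emb hsd x) : ℝ) = ∑ i : Fin d, a i * emb hsd x i := by
    simp [PiLp.inner_apply, RCLike.inner_apply, starRingEnd_apply]
    exact Finset.sum_congr rfl fun i _ => mul_comm _ _
  rw [h1]
  have h2 : ∑ i : Fin (s+1), a (Fin.castLE hsd i) * x i
      = ∑ i ∈ Finset.univ.map (Fin.castLEEmb hsd), a i * emb hsd x i := by
    rw [Finset.sum_map]
    apply Finset.sum_congr rfl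
    intro i _
    have : (Fin.castLEEmb hsd) i = Fin.castLE hsd i := rfl
    rw [this, emb_castLE]
  rw [h2]
  refine (Finset.sum_subset (Finset.subset_univ _) ?_).symm
  intro i _ hi
  have hge : ¬ ((i : ℕ) < s + 1) := by
    intro hlt
    exact hi (by
      simp only [Finset.mem_map]
      exact ⟨⟨i, hlt⟩, Finset.mem_univ _, by simp [Fin.castLEEmb, Fin.castLE]⟩)
  have : emb hsd x i = 0 := by simp only [emb]; rw [dif_neg hge]
  rw [this, mul_zero]

lemma emb_sparse (hsd : s + 1 ≤ d) (x : Fin (s+1) → ℝ) (i0 : Fin (s+1)) (hx : x i0 = 0) :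
    (Finset.univ.filter (fun i => emb hsd x i ≠ 0)).card ≤ s := by
  classical
  have hmap : ∀ i ∈ Finset.univ.filter (fun i => emb hsd x i ≠ 0),
      (if h : (i : ℕ) < s + 1 then (⟨i, h⟩ : Fin (s+1)) else i0) ∈ Finset.univ.erase i0 := by
    intro i hi
    rw [Finset.mem_filter] at hi
    have hlt : (i : ℕ) < s + 1 := by
      by_contra hge
      exact hi.2 (by simp only [emb]; rw [dif_neg hge])
    rw [dif_pos hlt]
    refine Finset.mem_erase.mpr ⟨?_, Finset.mem_univ _⟩
    intro heq
    apply hi.2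
    simp only [emb]
    rw [dif_pos hlt, heq, hx]
  have hinj : Set.InjOn (fun i : Fin d => if h : (i : ℕ) < s + 1 then (⟨i, h⟩ : Fin (s+1)) else i0)
      (Finset.univ.filter (fun i => emb hsd x i ≠ 0)) := by
    intro i hi j hj hij
    simp only [Finset.coe_filter, Set.mem_setOf_eq] at hi hj
    have hlti : (i : ℕ) < s + 1 := by
      by_contra hge; exact hi.2 (by simp only [emb]; rw [dif_neg hge])
    have hltj : (j : ℕ) < s + 1 := by
      by_contra hge; exact hj.2 (by simp only [emb]; rw [dif_neg hge])
    simp only at hij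
    rw [dif_pos hlti, dif_pos hltj] at hij
    have hval : (i : ℕ) = (j : ℕ) := by
      have := congrArg Fin.val hij
      simpa using this
    exact Fin.ext hval
  have := Finset.card_le_card_of_injOn _ hmap hinj
  calc (Finset.univ.filter (fun i => emb hsd x i ≠ 0)).card
      ≤ (Finset.univ.erase i0).card := this
    _ = s := by
        rw [Finset.card_erase_of_mem (Finset.mem_univ _), Finset.card_univ, Fintype.card_fin]
        omega

end SPRaux

theorem stmt_7 (m d s : ℕ) (hs : 1 ≤ s) (hsd : s + 1 ≤ d)
    (A : Fin m → EuclideanSpace ℝ (Fin d)) (b : Fin m → ℝ)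
    (h : Set.InjOn
      (fun x : EuclideanSpace ℝ (Fin d) => fun j : Fin m => abs ((inner ℝ (A j) (x) : ℝ) + b j))
      {x : EuclideanSpace ℝ (Fin d) | (Finset.univ.filter (fun i => x i ≠ 0)).card ≤ s}) :
    2 * s + 1 ≤ m := by
  by_contra hm
  push_neg at hm
  have hm' : m ≤ 2 * s := by omega
  obtain ⟨x, y, hxy, ⟨i, hxi⟩, ⟨k, hyk⟩, hmeas⟩ :=
    key s m hs hm' (fun j => fnl (fun i => A j (Fin.castLE hsd i))) b
  have hx_mem : emb hsd x ∈
      {z : EuclideanSpace ℝ (Fin d) | (Finset.univ.filter (fun i => z i ≠ 0)).card ≤ s} :=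
    emb_sparse hsd x i hxi
  have hy_mem : emb hsd y ∈
      {z : EuclideanSpace ℝ (Fin d) | (Finset.univ.filter (fun i => z i ≠ 0)).card ≤ s} :=
    emb_sparse hsd y k hyk
  have heq : (fun j : Fin m => |(inner ℝ (A j) (emb hsd x) : ℝ) + b j|)
      = (fun j : Fin m => |(inner ℝ (A j) (emb hsd y) : ℝ) + b j|) := by
    funext j
    rw [inner_emb hsd (A j) x, inner_emb hsd (A j) y]
    exact hmeas j
  have := h hx_mem hy_mem heq
  exact hxy (emb_injective hsd this)
end SPRaux
end

section
/- Let A = (a_1,...,a_m)^T ∈ C^{m×d} and b ∈ C^m. The map M_{A,b}(x) = (|⟨a_j,x⟩+b_j|)_{j=1}^m is injective on C^d if and only if for all u,v ∈ C^d with u ≠ 0, there exists k ∈ {1,...,m} such that Re(⟨u,a_k⟩(⟨a_k,v⟩+b_k)) ≠ 0. -/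
lemma abs_add_eq_abs_sub_iff' (c d : ℂ) :
    ‖c + d‖ = ‖c - d‖ ↔ ((starRingEnd ℂ) d * c).re = 0 := by
  rw [Complex.norm_def, Complex.norm_def,
    Real.sqrt_inj (Complex.normSq_nonneg _) (Complex.normSq_nonneg _)]
  simp only [Complex.normSq_apply, Complex.mul_re, Complex.add_re, Complex.add_im,
    Complex.sub_re, Complex.sub_im, Complex.conj_re, Complex.conj_im]
  constructor <;> intro h <;> nlinarith [h]

theorem stmt_9 (m d : ℕ) (A : Fin m → EuclideanSpace ℂ (Fin d)) (b : Fin m → ℂ) :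
    Function.Injective
      (fun x : EuclideanSpace ℂ (Fin d) => fun j : Fin m => ‖(inner ℂ (A j) x : ℂ) + b j‖) ↔
    ∀ u v : EuclideanSpace ℂ (Fin d), u ≠ 0 →
      ∃ k : Fin m, ((inner ℂ u (A k) : ℂ) * ((inner ℂ (A k) v : ℂ) + b k)).re ≠ 0 := by
  constructor
  · intro hinj u v hu
    by_contra hc
    push_neg at hc
    have heq : (fun j : Fin m => ‖(inner ℂ (A j) (v + u) : ℂ) + b j‖)
        = fun j : Fin m => ‖(inner ℂ (A j) (v - u) : ℂ) + b j‖ := by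
      funext k
      have h1 : (inner ℂ (A k) (v + u) : ℂ) + b k
          = ((inner ℂ (A k) v : ℂ) + b k) + (inner ℂ (A k) u : ℂ) := by
        rw [inner_add_right]; ring
      have h2 : (inner ℂ (A k) (v - u) : ℂ) + b k
          = ((inner ℂ (A k) v : ℂ) + b k) - (inner ℂ (A k) u : ℂ) := by
        rw [inner_sub_right]; ring
      rw [h1, h2, abs_add_eq_abs_sub_iff']
      have := hc k
      rwa [← inner_conj_symm] at this
    have hvu : v + u = v - u := hinj heq
    have h2 : (2 : ℂ) • u = 0 := by
      have h3 : (v + u) - (v - u) = (2 : ℂ) • u := by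
        rw [two_smul]; abel
      rw [← h3, hvu, sub_self]
    exact hu ((smul_eq_zero.mp h2).resolve_left (by norm_num))
  · intro h x y hxy
    by_contra hne
    set u : EuclideanSpace ℂ (Fin d) := ((2 : ℂ)⁻¹) • (x - y) with hudef
    set v : EuclideanSpace ℂ (Fin d) := ((2 : ℂ)⁻¹) • (x + y) with hvdef
    have hu : u ≠ 0 := by
      rw [hudef]
      intro hz
      rcases smul_eq_zero.mp hz with h' | h'
      · norm_num at h'
      · exact hne (sub_eq_zero.mp h')
    obtain ⟨k, hk⟩ := h u v hu
    apply hk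
    rw [← inner_conj_symm, ← abs_add_eq_abs_sub_iff']
    have hx : v + u = x := by rw [hudef, hvdef]; module
    have hy : v - u = y := by rw [hudef, hvdef]; module
    have e1 : ((inner ℂ (A k) v : ℂ) + b k) + (inner ℂ (A k) u : ℂ)
        = (inner ℂ (A k) x : ℂ) + b k := by
      rw [← hx, inner_add_right]; ring
    have e2 : ((inner ℂ (A k) v : ℂ) + b k) - (inner ℂ (A k) u : ℂ)
        = (inner ℂ (A k) y : ℂ) + b k := by
      rw [← hy, inner_sub_right]; ring
    rw [e1, e2]
    exact congrFun hxy k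
end

section
/- Let A ∈ C^{m×d} and b ∈ C^m. If m < 3d, then the map x ↦ (|⟨a_j,x⟩+b_j|)_{j=1}^m is not injective on C^d, where a_j are the rows of A. -/
open Submodule Module

theorem stmt_12 (m d : ℕ) (hm : m < 3 * d) (A : Fin m → EuclideanSpace ℂ (Fin d)) (b : Fin m → ℂ) :
    ¬ Function.Injective
      (fun x : EuclideanSpace ℂ (Fin d) => fun j : Fin m => ‖(inner ℂ (A j) x : ℂ) + b j‖) := by
  classical
  intro hinj
  by_cases hspan : Submodule.span ℂ (Set.range A) = ⊤
  · -- main case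
    obtain ⟨s, hs_sub, hs_span, hs_ind⟩ := exists_linearIndependent ℂ (Set.range A)
    haveI : Fintype s := (hs_ind.setFinite).fintype
    have hBspan : ⊤ ≤ Submodule.span ℂ (Set.range ((↑) : s → EuclideanSpace ℂ (Fin d))) := by
      rw [Subtype.range_coe, hs_span, hspan]
    let B : Basis s ℂ (EuclideanSpace ℂ (Fin d)) := Basis.mk hs_ind hBspan
    have hcard : Fintype.card s = d := by
      have h1 := Module.finrank_eq_card_basis B
      have h2 : Module.finrank ℂ (EuclideanSpace ℂ (Fin d)) = d := finrank_euclideanSpace_fin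
      omega
    have hchoose : ∀ v : s, ∃ j : Fin m, A j = (v : EuclideanSpace ℂ (Fin d)) := fun v => hs_sub v.2
    let ι : s → Fin m := fun v => (hchoose v).choose
    have hι : ∀ v : s, A (ι v) = (v : EuclideanSpace ℂ (Fin d)) := fun v => (hchoose v).choose_spec
    have hι_inj : Function.Injective ι := by
      intro v v' h
      have h2 : A (ι v) = A (ι v') := by rw [h]
      rw [hι, hι] at h2
      exact Subtype.ext h2
    let Φ : EuclideanSpace ℂ (Fin d) →ₗ[ℂ] (s → ℂ) :=
      { toFun := fun x v => (inner ℂ ((v : EuclideanSpace ℂ (Fin d))) x : ℂ)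
        map_add' := fun x y => by funext v; exact inner_add_right _ _ _
        map_smul' := fun c x => by funext v; exact inner_smul_right _ _ _ }
    have hΦ_inj : Function.Injective Φ := by
      rw [← LinearMap.ker_eq_bot, Submodule.eq_bot_iff]
      intro x hx
      have hx' : ∀ v : EuclideanSpace ℂ (Fin d), v ∈ Submodule.span ℂ s → (inner ℂ v x : ℂ) = 0 := by
        intro v hv
        induction hv using Submodule.span_induction with
        | mem v hv => exact congrFun (hx : Φ x = 0) ⟨v, hv⟩
        | zero => exact inner_zero_left _
        | add v w _ _ hv hw => rw [inner_add_left, hv, hw, add_zero]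
        | smul c v _ hv => rw [inner_smul_left, hv, mul_zero]
      have h0 : (inner ℂ x x : ℂ) = 0 := hx' x (by rw [hs_span, hspan]; trivial)
      exact inner_self_eq_zero.mp h0
    have hΦ_surj : Function.Surjective Φ := by
      rw [← LinearMap.range_eq_top]
      apply Submodule.eq_top_of_finrank_eq
      have hrk := LinearMap.finrank_range_add_finrank_ker Φ
      rw [LinearMap.ker_eq_bot.mpr hΦ_inj, finrank_bot, add_zero] at hrk
      rw [hrk]
      simp only [Module.finrank_pi, hcard]
      exact finrank_euclideanSpace_fin
    obtain ⟨x, hx⟩ := hΦ_surj (fun v => - b (ι v))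
    set c : Fin m → ℂ := fun j => (inner ℂ (A j) x : ℂ) + b j with hc
    have hcI : ∀ v : s, c (ι v) = 0 := by
      intro v
      have h2 : (inner ℂ ((v : EuclideanSpace ℂ (Fin d))) x : ℂ) = - b (ι v) := congrFun hx v
      show (inner ℂ (A (ι v)) x : ℂ) + b (ι v) = 0
      rw [hι v, h2]; ring
    let L : EuclideanSpace ℂ (Fin d) →ₗ[ℝ] ({j : Fin m // j ∉ Set.range ι} → ℝ) :=
      { toFun := fun u j => ((starRingEnd ℂ) (inner ℂ (A j.1) u : ℂ) * c j.1).re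
        map_add' := fun u w => by
          funext j
          simp [inner_add_right, add_mul]
        map_smul' := fun r u => by
          funext j
          have h2 : (inner ℂ (A j.1) (r • u) : ℂ) = (r : ℂ) * (inner ℂ (A j.1) u : ℂ) := by
            rw [show r • u = (r : ℂ) • u from (Complex.coe_smul r u).symm, inner_smul_right]
          simp only [RingHom.id_apply, Pi.smul_apply, smul_eq_mul]
          rw [h2, map_mul, Complex.conj_ofReal, mul_assoc, Complex.re_ofReal_mul] }
    have hE2 : Module.finrank ℝ (EuclideanSpace ℂ (Fin d)) = 2 * d := by
      have h3 := Module.finrank_mul_finrank ℝ ℂ (EuclideanSpace ℂ (Fin d))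
      simp only [Complex.finrank_real_complex, finrank_euclideanSpace_fin] at h3
      omega
    have hcompl : Fintype.card {j : Fin m // j ∉ Set.range ι} = m - d := by
      have h1 : Fintype.card {j : Fin m // j ∈ Set.range ι} = d :=
        (Fintype.card_congr (Equiv.ofInjective ι hι_inj).symm).trans hcard
      have h4 := Fintype.card_subtype_compl (fun j : Fin m => j ∈ Set.range ι)
      rw [h1, Fintype.card_fin] at h4
      exact h4
    have hdm : d ≤ m := by
      have h5 := Fintype.card_le_of_injective ι hι_inj
      rwa [hcard, Fintype.card_fin] at h5
    have hkerne : LinearMap.ker L ≠ ⊥ := by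
      intro hbot
      have hrk := LinearMap.finrank_range_add_finrank_ker L
      rw [hbot, finrank_bot, add_zero, hE2] at hrk
      have hle : Module.finrank ℝ (LinearMap.range L) ≤ m - d := by
        have h6 := Submodule.finrank_le (LinearMap.range L)
        rwa [Module.finrank_pi ℝ, hcompl] at h6
      omega
    obtain ⟨u, huker, hune⟩ := Submodule.exists_mem_ne_zero_of_ne_bot hkerne
    have hkey : ∀ j : Fin m, ((starRingEnd ℂ) (inner ℂ (A j) u : ℂ) * c j).re = 0 := by
      intro j
      by_cases hj : j ∈ Set.range ι
      · obtain ⟨v, rfl⟩ := hj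
        rw [hcI v, mul_zero, Complex.zero_re]
      · exact congrFun (huker : L u = 0) ⟨j, hj⟩
    have hpq : x + (2⁻¹ : ℂ) • u ≠ x - (2⁻¹ : ℂ) • u := by
      intro h
      apply hune
      have h2 : (2⁻¹ : ℂ) • u + (2⁻¹ : ℂ) • u = 0 := by
        have h3 := sub_eq_zero.mpr h
        rw [show x + (2⁻¹ : ℂ) • u - (x - (2⁻¹ : ℂ) • u) = (2⁻¹ : ℂ) • u + (2⁻¹ : ℂ) • u by abel] at h3
        exact h3
      rw [← add_smul] at h2
      norm_num at h2
      exact h2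
    apply hpq
    apply hinj
    funext j
    show ‖(inner ℂ (A j) (x + (2⁻¹ : ℂ) • u) : ℂ) + b j‖
      = ‖(inner ℂ (A j) (x - (2⁻¹ : ℂ) • u) : ℂ) + b j‖
    have hip : (inner ℂ (A j) (x + (2⁻¹ : ℂ) • u) : ℂ) + b j
        = c j + (2⁻¹ : ℂ) * (inner ℂ (A j) u : ℂ) := by
      rw [inner_add_right, inner_smul_right, hc]; ring
    have hiq : (inner ℂ (A j) (x - (2⁻¹ : ℂ) • u) : ℂ) + b j
        = c j - (2⁻¹ : ℂ) * (inner ℂ (A j) u : ℂ) := by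
      rw [inner_sub_right, inner_smul_right, hc]; ring
    rw [hip, hiq]
    set w : ℂ := (2⁻¹ : ℂ) * (inner ℂ (A j) u : ℂ) with hw
    have hre : (c j * (starRingEnd ℂ) w).re = 0 := by
      have h1 : c j * (starRingEnd ℂ) w
          = ((2⁻¹ : ℝ) : ℂ) * ((starRingEnd ℂ) (inner ℂ (A j) u : ℂ) * c j) := by
        rw [hw, map_mul]
        push_cast
        have h2 : (starRingEnd ℂ) (2⁻¹ : ℂ) = (2⁻¹ : ℂ) := by
          rw [show (2⁻¹ : ℂ) = ((2⁻¹ : ℝ) : ℂ) by push_cast; ring, Complex.conj_ofReal]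
        rw [h2]; ring
      rw [h1, Complex.re_ofReal_mul, hkey j, mul_zero]
    have hns : Complex.normSq (c j + w) = Complex.normSq (c j - w) := by
      rw [Complex.normSq_add, Complex.normSq_sub, hre]
      ring
    rw [Complex.norm_def, Complex.norm_def, hns]
  · -- easy case
    have hne : (Submodule.span ℂ (Set.range A))ᗮ ≠ ⊥ := by
      intro h
      exact hspan (Submodule.orthogonal_eq_bot_iff.mp h)
    obtain ⟨u, humem, hune⟩ := Submodule.exists_mem_ne_zero_of_ne_bot hne
    apply hune
    apply hinj
    show _ = (fun j : Fin m => ‖(inner ℂ (A j) (0 : EuclideanSpace ℂ (Fin d)) : ℂ) + b j‖)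
    funext j
    show ‖(inner ℂ (A j) u : ℂ) + b j‖ = ‖(inner ℂ (A j) (0 : EuclideanSpace ℂ (Fin d)) : ℂ) + b j‖
    have h1 : (inner ℂ (A j) u : ℂ) = 0 :=
      humem (A j) (Submodule.subset_span ⟨j, rfl⟩)
    rw [h1, inner_zero_right]
end

section
/- Let B = (a_1,...,a_d) ∈ C^{d×d} be nonsingular, let A = (B^T, B^T, B^T)^T ∈ C^{3d×d} be three stacked copies of B's rows, and let b = (b_{11},...,b_{d1},b_{12},...,b_{d2},b_{13},...,b_{d3}) ∈ C^{3d} be such that for each 1 ≤ j ≤ d the three complex numbers b_{j1}, b_{j2}, b_{j3} are not collinear in the complex plane. Then the map x ↦ (|⟨a_j,x⟩ + b_{jk}|)_{1≤j≤d, 1≤k≤3} is injective on C^d. -/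
open Complex

private lemma abs_eq_three_collinear {z w : ℂ} (hzw : z ≠ w) {c : Fin 3 → ℂ}
    (h : ∀ k, ‖z + c k‖ = ‖w + c k‖) :
    Collinear ℝ (Set.range c) := by
  set u := z - w with hu
  have hu0 : u ≠ 0 := sub_ne_zero.mpr hzw
  -- each c k satisfies (u * conj (c k)).re = const
  set C : ℝ := (Complex.normSq w - Complex.normSq z) / 2 with hC
  have key : ∀ k, (u * (starRingEnd ℂ) (c k)).re = C := by
    intro k
    have h2 : Complex.normSq (z + c k) = Complex.normSq (w + c k) := by
      rw [← Complex.sq_norm, ← Complex.sq_norm, h k]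
    rw [Complex.normSq_add, Complex.normSq_add] at h2
    have : Complex.normSq z + 2 * (z * (starRingEnd ℂ) (c k)).re
        = Complex.normSq w + 2 * (w * (starRingEnd ℂ) (c k)).re := by linarith
    have hsub : (z * (starRingEnd ℂ) (c k)).re - (w * (starRingEnd ℂ) (c k)).re
        = (Complex.normSq w - Complex.normSq z) / 2 := by linarith
    rw [hu]
    rw [sub_mul, Complex.sub_re]
    linarith
  rw [collinear_iff_exists_forall_eq_smul_vadd]
  refine ⟨(C : ℂ) * u / Complex.normSq u, Complex.I * u, ?_⟩
  rintro x ⟨k, rfl⟩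
  have hk := key k
  set p : ℂ := (C : ℂ) * u / Complex.normSq u with hp
  have hnsq : (Complex.normSq u : ℂ) ≠ 0 := by
    exact_mod_cast fun h0 => hu0 (Complex.normSq_eq_zero.mp (by exact_mod_cast h0))
  have hup : u * (starRingEnd ℂ) p = (C : ℂ) := by
    rw [hp]
    rw [map_div₀, map_mul]
    simp only [Complex.conj_ofReal]
    field_simp
    linear_combination (C : ℂ) * Complex.mul_conj u
  set s : ℂ := u * (starRingEnd ℂ) (c k - p) with hs
  have hsre : s.re = 0 := by
    rw [hs, map_sub, mul_sub, Complex.sub_re, hup]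
    simp [hk]
  -- s is purely imaginary; solve for c k - p
  have hckp : c k - p = (-s.im / Complex.normSq u : ℝ) • (Complex.I * u) := by
    have hs' : s = s.im * Complex.I := by
      apply Complex.ext <;> simp [hsre]
    have hconj : (starRingEnd ℂ) (c k - p) = s / u := by
      rw [hs]; field_simp
    have heq : c k - p = (starRingEnd ℂ) (s / u) := by
      rw [← hconj, Complex.conj_conj]
    have hcu : (starRingEnd ℂ) u ≠ 0 := by simpa using hu0
    have hns : (Complex.normSq u : ℂ) ≠ 0 := hnsq
    rw [heq, map_div₀, hs', map_mul, Complex.conj_I, Complex.conj_ofReal,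
      Complex.real_smul]
    push_cast
    simp only [Complex.mul_im, Complex.ofReal_re, Complex.ofReal_im, Complex.I_re, Complex.I_im,
      mul_one, mul_zero, add_zero]
    field_simp
    linear_combination (s.im : ℂ) * Complex.mul_conj u
  refine ⟨-s.im / Complex.normSq u, ?_⟩
  rw [vadd_eq_add, ← hckp]
  ring

theorem stmt_13 (d : ℕ) (a : Fin d → EuclideanSpace ℂ (Fin d))
    (ha : LinearIndependent ℂ a)
    (b : Fin d → Fin 3 → ℂ) (hb : ∀ j : Fin d, ¬ Collinear ℝ (Set.range (b j))) :
    Function.Injective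
      (fun x : EuclideanSpace ℂ (Fin d) => fun p : Fin d × Fin 3 =>
        ‖(inner ℂ (a p.1) x : ℂ) + b p.1 p.2‖) := by
  intro x y hxy
  rcases Nat.eq_zero_or_pos d with rfl | hd
  · exact Subsingleton.elim x y
  haveI : Nonempty (Fin d) := ⟨⟨0, hd⟩⟩
  simp only [funext_iff] at hxy
  have hinner : ∀ j, (inner ℂ (a j) x : ℂ) = inner ℂ (a j) y := by
    intro j
    by_contra hne
    exact hb j (abs_eq_three_collinear hne (fun k => hxy (j, k)))
  have hcard : Fintype.card (Fin d) = Module.finrank ℂ (EuclideanSpace ℂ (Fin d)) := by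
    simp [finrank_euclideanSpace_fin]
  let B := basisOfLinearIndependentOfCardEqFinrank ha hcard
  refine InnerProductSpace.ext_inner_left_basis B (fun i => ?_)
  have : B i = a i := by
    simp [B, coe_basisOfLinearIndependentOfCardEqFinrank]
  rw [this]
  exact hinner i
end

section
/- Let d ≥ 2 and m ≥ 3d. The set of pairs (A,b) ∈ C^{m×d} × C^m that are affine phase retrievable for C^d is not an open subset of C^{m×d} × C^m. -/
open Complex

lemma three_point (z w : ℂ) (h0 : ‖z‖ = ‖w‖)
    (h1 : ‖z + 1‖ = ‖w + 1‖)
    (h2 : ‖z + I‖ = ‖w + I‖) : z = w := by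
  have e0 : Complex.normSq z = Complex.normSq w := by
    rw [← Complex.sq_norm, ← Complex.sq_norm, h0]
  have e1 : Complex.normSq (z + 1) = Complex.normSq (w + 1) := by
    rw [← Complex.sq_norm, ← Complex.sq_norm, h1]
  have e2 : Complex.normSq (z + I) = Complex.normSq (w + I) := by
    rw [← Complex.sq_norm, ← Complex.sq_norm, h2]
  simp only [Complex.normSq_apply, Complex.add_re, Complex.add_im, Complex.one_re,
    Complex.one_im, Complex.I_re, Complex.I_im] at e0 e1 e2
  apply Complex.ext <;> nlinarith [e0, e1, e2]

theorem stmt_14 (m d : ℕ) (hd : 2 ≤ d) (hm : 3 * d ≤ m) :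
    ¬ IsOpen {p : (Fin m → EuclideanSpace ℂ (Fin d)) × (Fin m → ℂ) |
        Function.Injective
          (fun x : EuclideanSpace ℂ (Fin d) => fun j : Fin m =>
            ‖(inner ℂ (p.1 j) x : ℂ) + p.2 j‖)} := by
  intro hopen
  set S := {p : (Fin m → EuclideanSpace ℂ (Fin d)) × (Fin m → ℂ) |
        Function.Injective
          (fun x : EuclideanSpace ℂ (Fin d) => fun j : Fin m =>
            ‖(inner ℂ (p.1 j) x : ℂ) + p.2 j‖)} with hS
  have h0d : 0 < d := by omega
  have h1d : 1 < d := by omega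
  -- the base frame
  set A : Fin m → EuclideanSpace ℂ (Fin d) := fun j =>
    if h : (j : ℕ) < 3 * d then
      EuclideanSpace.single ⟨(j : ℕ) / 3, by omega⟩ (1 : ℂ) else 0 with hA
  set b : Fin m → ℂ := fun j =>
    if (j : ℕ) < 3 * d then
      (if (j : ℕ) % 3 = 0 then 0 else if (j : ℕ) % 3 = 1 then 1 else I) else 0 with hb
  set E : Fin m → EuclideanSpace ℂ (Fin d) := fun j =>
    if (j : ℕ) = 0 then EuclideanSpace.single ⟨1, h1d⟩ (1 : ℂ) else 0 with hE
  set f : ℝ → (Fin m → EuclideanSpace ℂ (Fin d)) × (Fin m → ℂ) := fun t =>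
    (fun j => A j + (t : ℂ) • E j, b) with hf
  -- (A, b) is affine phase retrievable
  have hmem : f 0 ∈ S := by
    intro x y hxy
    have key : ∀ j : Fin m, ‖(inner ℂ (A j) x : ℂ) + b j‖
        = ‖(inner ℂ (A j) y : ℂ) + b j‖ := by
      intro j
      have := congrFun hxy j
      simpa [hf] using this
    ext i
    have hi3 : 3 * (i : ℕ) + 2 < m := by
      have := i.isLt; omega
    have meas : ∀ r : ℕ, r < 3 →
        ‖x i + (if r = 0 then 0 else if r = 1 then 1 else I)‖
        = ‖y i + (if r = 0 then 0 else if r = 1 then 1 else I)‖ := by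
      intro r hr
      have hjm : 3 * (i : ℕ) + r < m := by omega
      have h3d : 3 * (i : ℕ) + r < 3 * d := by have := i.isLt; omega
      have hdiv : (3 * (i : ℕ) + r) / 3 = i := by omega
      have hmod : (3 * (i : ℕ) + r) % 3 = r := by omega
      have := key ⟨3 * (i : ℕ) + r, hjm⟩
      simp only [hA, hb, Fin.val_mk, h3d, if_pos, dif_pos, hdiv, hmod] at this
      rw [EuclideanSpace.inner_single_left, EuclideanSpace.inner_single_left] at this
      simp only [map_one, one_mul] at this
      convert this using 3
    have m0 := meas 0 (by norm_num)
    have m1 := meas 1 (by norm_num)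
    have m2 := meas 2 (by norm_num)
    simp only [if_pos, if_neg, reduceIte] at m0 m1 m2
    simp only [add_zero] at m0
    exact three_point _ _ m0 m1 m2
  -- nearby frames are not phase retrievable
  have hnot : ∀ t : ℝ, t ≠ 0 → f t ∉ S := by
    intro t ht hmemt
    set y0 : ℂ := (1 + I) / (2 * t) with hy0
    set u : EuclideanSpace ℂ (Fin d) := EuclideanSpace.single ⟨1, h1d⟩ y0 with hu
    set v : EuclideanSpace ℂ (Fin d) :=
      EuclideanSpace.single ⟨0, h0d⟩ (-1 - I) + EuclideanSpace.single ⟨1, h1d⟩ y0 with hv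
    have htC : (t : ℂ) ≠ 0 := by exact_mod_cast ht
    have huv : u ≠ v := by
      intro h
      have := congrArg (fun w : EuclideanSpace ℂ (Fin d) => w ⟨0, h0d⟩) h
      simp [hu, hv, EuclideanSpace.single_apply, Fin.ext_iff, Complex.ext_iff] at this
    apply huv
    apply hmemt
    funext j
    simp only
    rcases eq_or_ne (j : ℕ) 0 with hj0 | hj0
    · -- the perturbed row
      have hj3 : (j : ℕ) < 3 * d := by omega
      have hdiv : (j : ℕ) / 3 = 0 := by omega
      simp only [hf, hA, hb, hE, hj0, if_pos, dif_pos hj3, hj3, hdiv]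
      rw [inner_add_left, inner_add_left, inner_smul_left]
      simp only [hu, hv, dif_pos h0d, EuclideanSpace.inner_single_left, inner_smul_left, map_one, one_mul,
        Complex.conj_ofReal, PiLp.add_apply, EuclideanSpace.single_apply, Fin.mk.injEq,
        if_pos]
      norm_num
      have hty : (t : ℂ) * y0 = (1 + I) / 2 := by
        rw [hy0]; field_simp
      rw [hty]
      have hneg : (-1 - I) + (1 + I) / 2 = -((1 + I) / 2) := by ring
      rw [dif_pos h0d, EuclideanSpace.inner_single_left, EuclideanSpace.inner_single_left]
      simp only [map_one, one_mul, PiLp.add_apply, EuclideanSpace.single_apply, Fin.mk.injEq]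
      norm_num
      rw [hneg, norm_neg]
      simp [norm_div]
    · -- unperturbed rows
      have hE0 : E j = 0 := by simp [hE, hj0]
      simp only [hf, hE0, smul_zero, add_zero]
      rcases lt_or_ge (j : ℕ) (3 * d) with hj3 | hj3
      · have hbj : b j = (if (j : ℕ) % 3 = 0 then 0 else if (j : ℕ) % 3 = 1 then 1 else I) := by
          simp [hb, hj3]
        simp only [hA, dif_pos hj3, hbj, EuclideanSpace.inner_single_left, map_one, one_mul]
        rcases eq_or_ne ((j : ℕ) / 3) 0 with hq | hq
        · have hj12 : (j : ℕ) = 1 ∨ (j : ℕ) = 2 := by omega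
          rcases hj12 with hc | hc
          · simp only [hu, hv, PiLp.add_apply, EuclideanSpace.single_apply, Fin.mk.injEq, hq,
              hc]
            have e1 : (-1 - I) + 1 = -I := by ring
            norm_num [e1, norm_neg]
          · simp only [hu, hv, PiLp.add_apply, EuclideanSpace.single_apply, Fin.mk.injEq, hq,
              hc]
            have e1 : (-1 - I) + I = -1 := by ring
            norm_num [e1, norm_neg]
        · have huv' : u ⟨(j : ℕ) / 3, by omega⟩ = v ⟨(j : ℕ) / 3, by omega⟩ := by
            simp [hu, hv, EuclideanSpace.single_apply, Fin.mk.injEq, hq]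
          rw [huv']
      · simp [hA, hb, dif_neg (not_lt.2 hj3), not_lt.2 hj3]
  -- derive contradiction
  have hclosed : IsClosed Sᶜ := hopen.isClosed_compl
  have htend : Filter.Tendsto (fun n : ℕ => f (1 / (n + 1))) Filter.atTop (nhds (f 0)) := by
    have hcont : Continuous f := by
      apply Continuous.prodMk
      · exact continuous_pi fun j => continuous_const.add
          ((Complex.continuous_ofReal.smul continuous_const))
      · exact continuous_const
    exact (hcont.tendsto 0).comp tendsto_one_div_add_atTop_nhds_zero_nat
  have hmemc : f 0 ∈ Sᶜ := by
    apply hclosed.mem_of_tendsto htend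
    filter_upwards with n
    exact hnot _ (by positivity)
  exact hmemc hmem
end

section
/- Let H = R or C, let (A,b) ∈ H^{m×d} × H^m be affine phase retrievable, and let Ω ⊂ H^d be a compact set. Then there exists c_2 > 0 such that for all x, y ∈ Ω: ‖M²_{A,b}(x) − M²_{A,b}(y)‖ ≥ c_2 ‖x − y‖, where M²_{A,b}(x) = (|⟨a_j,x⟩+b_j|²)_{j=1}^m. -/
open RCLike ComplexConjugate

private lemma aux_sq_sub {K : Type*} [RCLike K] (z w : K) :
    ‖z‖ ^ 2 - ‖w‖ ^ 2 = re ((z - w) * conj (z + w)) := by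
  have h1 : (z - w) * conj (z + w) = z * conj z - w * conj w + (z * conj w - w * conj z) := by
    simp only [map_add]; ring
  have h2 : re (z * conj w - w * conj z) = 0 := by
    have h3 : conj (w * conj z) = z * conj w := by
      simp only [map_mul, RCLike.conj_conj]; ring
    rw [map_sub, ← h3, RCLike.conj_re, sub_self]
  rw [h1, map_add, h2, add_zero, map_sub, RCLike.mul_conj, RCLike.mul_conj]
  norm_cast

theorem stmt_15 {K : Type*} [RCLike K] (m d : ℕ)
    (A : Fin m → EuclideanSpace K (Fin d)) (b : Fin m → K)
    (hpr : Function.Injective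
      (fun x : EuclideanSpace K (Fin d) => fun j : Fin m => ‖(inner K (A j) x : K) + b j‖))
    (Ω : Set (EuclideanSpace K (Fin d))) (hΩ : IsCompact Ω) :
    ∃ c₂ > 0, ∀ x ∈ Ω, ∀ y ∈ Ω,
      c₂ * ‖x - y‖ ≤
        ‖(show EuclideanSpace ℝ (Fin m) from
            WithLp.toLp 2 (fun j => ‖(inner K (A j) x : K) + b j‖ ^ 2 - ‖(inner K (A j) y : K) + b j‖ ^ 2))‖ := by
  classical
  -- injectivity of the squared measurement map
  have hinj2 : ∀ x y : EuclideanSpace K (Fin d), (∀ j, ‖(inner K (A j) x : K) + b j‖ ^ 2 = ‖(inner K (A j) y : K) + b j‖ ^ 2)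
      → x = y := by
    intro x y h
    apply hpr
    funext j
    show ‖(inner K (A j) x : K) + b j‖ = ‖(inner K (A j) y : K) + b j‖
    rw [← Real.sqrt_sq (norm_nonneg ((inner K (A j) x : K) + b j)),
      ← Real.sqrt_sq (norm_nonneg ((inner K (A j) y : K) + b j)), h j]
  -- the auxiliary continuous function
  set g : (EuclideanSpace K (Fin d) × EuclideanSpace K (Fin d)) × EuclideanSpace K (Fin d) → ℝ := fun p =>
    ‖(show EuclideanSpace ℝ (Fin m) from
        WithLp.toLp 2 (fun j => re ((inner K (A j) p.2 : K) * conj ((inner K (A j) (p.1.1 + p.1.2) : K) + 2 * b j))))‖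
    with hgdef
  have hg : Continuous g := by
    apply Continuous.norm
    apply (PiLp.continuous_toLp 2 _).comp
    apply continuous_pi
    intro j
    apply RCLike.continuous_re.comp
    apply Continuous.mul
    · exact Continuous.inner continuous_const continuous_snd
    · apply RCLike.continuous_conj.comp
      apply Continuous.add _ continuous_const
      exact Continuous.inner continuous_const (continuous_fst.fst.add continuous_fst.snd)
  -- scaling identity
  have hscale : ∀ (x y u : EuclideanSpace K (Fin d)) (t : ℝ), x - y = t • u →
      (show EuclideanSpace ℝ (Fin m) from
        WithLp.toLp 2 (fun j => ‖(inner K (A j) x : K) + b j‖ ^ 2 - ‖(inner K (A j) y : K) + b j‖ ^ 2))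
      = t • (show EuclideanSpace ℝ (Fin m) from
        WithLp.toLp 2 (fun j => re ((inner K (A j) u : K) * conj ((inner K (A j) (x + y) : K) + 2 * b j)))) := by
    intro x y u t h
    ext j
    show ‖(inner K (A j) x : K) + b j‖ ^ 2 - ‖(inner K (A j) y : K) + b j‖ ^ 2
      = t * re ((inner K (A j) u : K) * conj ((inner K (A j) (x + y) : K) + 2 * b j))
    rw [aux_sq_sub]
    have e1 : ((inner K (A j) x : K) + b j) - ((inner K (A j) y : K) + b j)
        = (t : K) * (inner K (A j) u : K) := by
      rw [show (inner K (A j) x : K) + b j - ((inner K (A j) y : K) + b j)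
          = (inner K (A j) x : K) - (inner K (A j) y : K) by ring, ← inner_sub_right, h,
        RCLike.real_smul_eq_coe_smul (K := K), inner_smul_right]
    have e2 : ((inner K (A j) x : K) + b j) + ((inner K (A j) y : K) + b j)
        = (inner K (A j) (x + y) : K) + 2 * b j := by
      rw [inner_add_right]; ring
    rw [e1, e2, mul_assoc]
    simp
  -- key lemma: nondegeneracy at diagonal points
  have hkey : ∀ (x u : EuclideanSpace K (Fin d)), ‖u‖ = 1 →
      (∀ j, re ((inner K (A j) u : K) * conj ((inner K (A j) (x + x) : K) + 2 * b j)) = 0) → False := by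
    intro x u hu h
    have heq : x + u = x - u := by
      apply hinj2
      intro j
      have hd : ‖(inner K (A j) (x + u) : K) + b j‖ ^ 2 - ‖(inner K (A j) (x - u) : K) + b j‖ ^ 2
          = 0 := by
        rw [aux_sq_sub]
        have e1 : ((inner K (A j) (x + u) : K) + b j) - ((inner K (A j) (x - u) : K) + b j)
            = 2 * (inner K (A j) u : K) := by
          rw [inner_add_right, inner_sub_right]; ring
        have e2 : ((inner K (A j) (x + u) : K) + b j) + ((inner K (A j) (x - u) : K) + b j)
            = (inner K (A j) (x + x) : K) + 2 * b j := by
          rw [inner_add_right, inner_sub_right, inner_add_right]; ring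
        rw [e1, e2, mul_assoc, two_mul, map_add, h j, add_zero]
      linarith
    have hu0 : u = 0 := by
      have : u + u = 0 := by
        have := sub_eq_zero.mpr heq
        rw [show x + u - (x - u) = u + u by abel] at this
        exact this
      have h2 : (2 : ℝ) • u = 0 := by rw [two_smul]; exact this
      simpa using h2
    rw [hu0, norm_zero] at hu
    norm_num at hu
  -- the compact set
  set S : Set ((EuclideanSpace K (Fin d) × EuclideanSpace K (Fin d)) × EuclideanSpace K (Fin d)) := {p | p.1.1 ∈ Ω ∧ p.1.2 ∈ Ω ∧ ‖p.2‖ = 1 ∧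
    p.1.1 - p.1.2 = ‖p.1.1 - p.1.2‖ • p.2} with hSdef
  have hScomp : IsCompact S := by
    apply IsCompact.of_isClosed_subset ((hΩ.prod hΩ).prod (isCompact_sphere 0 1))
    · have : S = (((Ω ×ˢ Ω) ×ˢ Metric.sphere (0 : EuclideanSpace K (Fin d)) 1) ∩
          {p : (EuclideanSpace K (Fin d) × EuclideanSpace K (Fin d)) × EuclideanSpace K (Fin d) | p.1.1 - p.1.2 = ‖p.1.1 - p.1.2‖ • p.2}) := by
        ext p
        simp only [hSdef, Set.mem_setOf_eq, Set.mem_inter_iff, Set.mem_prod,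
          mem_sphere_iff_norm, sub_zero]
        tauto
      rw [this]
      apply IsClosed.inter
      · exact ((hΩ.isClosed.prod hΩ.isClosed).prod Metric.isClosed_sphere)
      · apply isClosed_eq
        · exact (continuous_fst.fst.sub continuous_fst.snd)
        · exact Continuous.smul (continuous_fst.fst.sub continuous_fst.snd).norm continuous_snd
    · rintro ⟨⟨x, y⟩, u⟩ ⟨hx, hy, hu, -⟩
      exact ⟨⟨hx, hy⟩, by simpa using hu⟩
  -- positivity of g on S
  have hpos : ∀ p ∈ S, 0 < g p := by
    rintro ⟨⟨x, y⟩, u⟩ ⟨hx, hy, hu, hsu⟩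
    rw [hgdef]
    rw [norm_pos_iff]
    intro h0
    rcases eq_or_ne x y with rfl | hne
    · apply hkey x u hu
      intro j
      have := congrArg (fun v => v j) h0
      simp only [PiLp.zero_apply, Pi.zero_apply, PiLp.toLp_apply] at this
      simpa using this
    · apply hne
      apply hinj2
      intro j
      have hd := hscale x y u ‖x - y‖ hsu
      rw [h0, smul_zero] at hd
      have := congrArg (fun v => v j) hd
      simp only [PiLp.zero_apply, Pi.zero_apply, PiLp.toLp_apply] at this
      linarith
  by_cases hS : S.Nonempty
  · obtain ⟨p₀, hp₀S, hp₀min⟩ := hScomp.exists_isMinOn hS hg.continuousOn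
    refine ⟨g p₀, hpos p₀ hp₀S, ?_⟩
    intro x hx y hy
    rcases eq_or_ne x y with rfl | hne
    · simp only [sub_self, norm_zero, mul_zero]
      exact norm_nonneg _
    · have ht : (0 : ℝ) < ‖x - y‖ := by
        rw [norm_pos_iff]; exact sub_ne_zero.mpr hne
      set u : EuclideanSpace K (Fin d) := ‖x - y‖⁻¹ • (x - y) with hudef
      have hxyu : x - y = ‖x - y‖ • u := by
        rw [hudef, smul_inv_smul₀ ht.ne']
      have humem : ‖u‖ = 1 := by
        rw [hudef, norm_smul, norm_inv, norm_norm, inv_mul_cancel₀ ht.ne']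
      have hmem : ((x, y), u) ∈ S := ⟨hx, hy, humem, hxyu⟩
      have hle : g p₀ ≤ g ((x, y), u) := hp₀min hmem
      have hid : ‖(show EuclideanSpace ℝ (Fin m) from
          WithLp.toLp 2 (fun j => ‖(inner K (A j) x : K) + b j‖ ^ 2 - ‖(inner K (A j) y : K) + b j‖ ^ 2))‖
          = ‖x - y‖ * g ((x, y), u) := by
        rw [hscale x y u ‖x - y‖ hxyu, norm_smul, Real.norm_eq_abs, abs_of_pos ht]
      rw [hid, mul_comm (g p₀)]
      exact mul_le_mul_of_nonneg_left hle ht.le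
  · refine ⟨1, one_pos, ?_⟩
    intro x hx y hy
    rcases eq_or_ne x y with rfl | hne
    · simp only [sub_self, norm_zero, mul_zero]
      exact norm_nonneg _
    · exfalso
      apply hS
      have ht : (0 : ℝ) < ‖x - y‖ := by
        rw [norm_pos_iff]; exact sub_ne_zero.mpr hne
      refine ⟨((x, y), ‖x - y‖⁻¹ • (x - y)), hx, hy, ?_, ?_⟩
      · rw [norm_smul, norm_inv, norm_norm, inv_mul_cancel₀ ht.ne']
      · rw [smul_inv_smul₀ ht.ne']
end

section
/- Let H = R or C and let (A,b) ∈ H^{m×d} × H^m with A ≠ 0 (in particular m, d ≥ 1). Then the map M_{A,b}(x) = (|⟨a_j,x⟩+b_j|)_{j=1}^m is not bi-Lipschitz on H^d: there is no constant c > 0 such that ‖M_{A,b}(x) − M_{A,b}(y)‖ ≥ c ‖x − y‖ for all x, y ∈ H^d. -/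
theorem stmt_17 {K : Type*} [RCLike K] (m d : ℕ)
    (A : Fin m → EuclideanSpace K (Fin d)) (b : Fin m → K) (hA : A ≠ 0) :
    ¬ ∃ c > 0, ∀ x y : EuclideanSpace K (Fin d),
        c * ‖x - y‖ ≤
          ‖(show EuclideanSpace ℝ (Fin m) from
              WithLp.toLp 2 (fun j => ‖(inner K (A j) x : K) + b j‖ - ‖(inner K (A j) y : K) + b j‖))‖ := by
  rintro ⟨c, hc, h⟩
  obtain ⟨j0, hj0⟩ : ∃ j, A j ≠ 0 := by
    by_contra hcon
    push_neg at hcon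
    exact hA (funext hcon)
  obtain ⟨i, _⟩ : ∃ i, A j0 i ≠ 0 := by
    by_contra hcon
    push_neg at hcon
    exact hj0 (PiLp.ext hcon)
  set u : EuclideanSpace K (Fin d) := EuclideanSpace.single i 1 with hu
  have hnu : ‖u‖ = 1 := by simp [hu, EuclideanSpace.norm_single]
  set B := Real.sqrt (∑ j : Fin m, (2 * ‖b j‖) ^ 2) with hB
  have hB0 : 0 ≤ B := Real.sqrt_nonneg _
  set t : ℝ := (B + 1) / (2 * c) with ht
  have ht0 : 0 < t := by positivity
  set x : EuclideanSpace K (Fin d) := ((t : K)) • u with hx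
  have key := h x (-x)
  -- norm of x - (-x)
  have hxy : ‖x - (-x)‖ = 2 * t := by
    have : x - (-x) = (((2 * t : ℝ) : K)) • u := by
      rw [hx]; push_cast
      rw [sub_neg_eq_add, ← add_smul]
      ring_nf
    rw [this, norm_smul, hnu, RCLike.norm_ofReal, abs_of_pos (by positivity)]
    ring
  -- bound the RHS
  set z : EuclideanSpace ℝ (Fin m) :=
    WithLp.toLp 2 (fun j => ‖(inner K (A j) x : K) + b j‖ - ‖(inner K (A j) (-x) : K) + b j‖) with hz
  have hzj : ∀ j, |z j| ≤ 2 * ‖b j‖ := by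
    intro j
    have hinner : (inner K (A j) (-x) : K) = -(inner K (A j) x : K) := by
      simp [inner_neg_right]
    set w : K := (inner K (A j) x : K) with hw
    have h1 : ‖-w + b j‖ = ‖w - b j‖ := by
      rw [show -w + b j = -(w - b j) by ring, norm_neg]
    have h2 : z j = ‖w + b j‖ - ‖w - b j‖ := by
      rw [hz]; simp only [hinner, h1, ← hw]
    rw [h2]
    calc |‖w + b j‖ - ‖w - b j‖| ≤ ‖(w + b j) - (w - b j)‖ := abs_norm_sub_norm_le _ _
      _ = ‖(2 : K) * b j‖ := by ring_nf
      _ = 2 * ‖b j‖ := by rw [norm_mul]; norm_num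
  have hzB : ‖z‖ ≤ B := by
    rw [EuclideanSpace.norm_eq, hB]
    apply Real.sqrt_le_sqrt
    apply Finset.sum_le_sum
    intro j _
    have := hzj j
    have h0 : ‖z j‖ = |z j| := Real.norm_eq_abs _
    rw [h0]
    exact pow_le_pow_left₀ (abs_nonneg _) this 2
  have hfin : c * ‖x - (-x)‖ = B + 1 := by
    rw [hxy, ht]
    field_simp
  have : (B + 1 : ℝ) ≤ B := by
    calc (B + 1 : ℝ) = c * ‖x - (-x)‖ := hfin.symm
      _ ≤ ‖z‖ := key
      _ ≤ B := hzB
  linarith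
end

section
/- Let A = (a_1,...,a_m)^T ∈ R^{m×d} and b ∈ R^m. Then (A,b) is affine phase retrievable for R^d if and only if for every v ∈ R^d, the vectors {(⟨a_j,v⟩ + b_j) a_j : 1 ≤ j ≤ m} span R^d (equivalently, the Jacobian of the map M²_{A,b} has rank d at every point). -/
open scoped RealInnerProductSpace

lemma aux_eq_zero_of_span {d : ℕ} {m : ℕ} (g : Fin m → EuclideanSpace ℝ (Fin d))
    (u : EuclideanSpace ℝ (Fin d))
    (hsp : Submodule.span ℝ (Set.range g) = ⊤)
    (h : ∀ j, (inner ℝ (g j) u : ℝ) = 0) : u = 0 := by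
  have hall : ∀ w ∈ Submodule.span ℝ (Set.range g), (inner ℝ w u : ℝ) = 0 := by
    intro w hw
    induction hw using Submodule.span_induction with
    | mem w hw =>
      obtain ⟨j, rfl⟩ := hw
      exact h j
    | zero => simp
    | add w₁ w₂ _ _ h1 h2 => rw [inner_add_left, h1, h2]; ring
    | smul c w _ hw => rw [real_inner_smul_left, hw]; ring
  have hmem : u ∈ Submodule.span ℝ (Set.range g) := by rw [hsp]; trivial
  exact inner_self_eq_zero.mp (hall u hmem)

lemma aux_abs_eq {a b : ℝ} (h : a ^ 2 = b ^ 2) : |a| = |b| := by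
  rw [← Real.sqrt_sq_eq_abs, ← Real.sqrt_sq_eq_abs, h]

theorem stmt_19 (m d : ℕ) (A : Fin m → EuclideanSpace ℝ (Fin d)) (b : Fin m → ℝ) :
    Function.Injective
      (fun x : EuclideanSpace ℝ (Fin d) => fun j : Fin m => abs ((inner ℝ (A j) (x) : ℝ) + b j)) ↔
    ∀ v : EuclideanSpace ℝ (Fin d),
      Submodule.span ℝ (Set.range (fun j : Fin m => ((inner ℝ (A j) (v) : ℝ) + b j) • A j)) = ⊤ := by
  constructor
  · intro hinj v
    by_contra hne
    have horth : (Submodule.span ℝ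
        (Set.range (fun j : Fin m => ((inner ℝ (A j) (v) : ℝ) + b j) • A j)))ᗮ ≠ ⊥ := by
      intro h
      exact hne (Submodule.orthogonal_eq_bot_iff.mp h)
    obtain ⟨u, hu, hu0⟩ := Submodule.exists_mem_ne_zero_of_ne_bot horth
    have key : ∀ j : Fin m, ((inner ℝ (A j) (v) : ℝ) + b j) * (inner ℝ (A j) u : ℝ) = 0 := by
      intro j
      have := hu (((inner ℝ (A j) (v) : ℝ) + b j) • A j)
        (Submodule.subset_span ⟨j, rfl⟩)
      rwa [real_inner_smul_left] at this
    have heq : (fun j : Fin m => |(inner ℝ (A j) (v + u) : ℝ) + b j|) =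
        (fun j : Fin m => |(inner ℝ (A j) (v - u) : ℝ) + b j|) := by
      funext j
      apply aux_abs_eq
      rw [inner_add_right, inner_sub_right]
      nlinarith [key j]
    have := hinj heq
    apply hu0
    have : v + u = v - u := this
    have h2 : u + u = 0 := by
      have := congrArg (fun w => w - v + u) this
      simpa [add_comm, add_left_comm, sub_eq_add_neg, add_assoc] using this
    have : (2 : ℝ) • u = 0 := by rw [two_smul]; exact h2
    simpa using smul_eq_zero.mp this
  · intro hsp x y hxy
    have habs : ∀ j : Fin m, |(inner ℝ (A j) x : ℝ) + b j| = |(inner ℝ (A j) y : ℝ) + b j| :=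
      fun j => congrFun hxy j
    set v : EuclideanSpace ℝ (Fin d) := (2 : ℝ)⁻¹ • (x + y) with hv
    have key : ∀ j : Fin m,
        (inner ℝ ((((inner ℝ (A j) (v) : ℝ) + b j) • A j)) (x - y) : ℝ) = 0 := by
      intro j
      have hsq : ((inner ℝ (A j) x : ℝ) + b j) ^ 2 = ((inner ℝ (A j) y : ℝ) + b j) ^ 2 := by
        have := habs j
        calc ((inner ℝ (A j) x : ℝ) + b j) ^ 2 = |(inner ℝ (A j) x : ℝ) + b j| ^ 2 := (sq_abs _).symm
          _ = |(inner ℝ (A j) y : ℝ) + b j| ^ 2 := by rw [this]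
          _ = ((inner ℝ (A j) y : ℝ) + b j) ^ 2 := sq_abs _
      rw [real_inner_smul_left, hv, inner_sub_right, inner_smul_right, inner_add_right]
      nlinarith [hsq]
    have : x - y = 0 :=
      aux_eq_zero_of_span _ _ (hsp v) key
    exact sub_eq_zero.mp this
end
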